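/- Let c > 0 and define Φ : ℝ × (0,∞) × ℝ² → ℝ² by Φ(x₁, y₁, x₂, y₂) = (y₁x₂ + (c - x₁)y₂ - 2, x₂² + y₂² - c x₂ + ((c x₁ - x₁² - y₁²)/y₁) y₂). If C = (x_C, y_C) with y_C > 0 and c·y_C = 2, then Φ(C, C) = (0,0) and the differential of Φ in the last two variables at (C, C) has determinant (x_C - c)² + y_C², which is strictly positive. -/

import Mathlib

/-- The continuous linear map `ℝ × ℝ → ℝ × ℝ` with matrix `[[a, b], [c, d]]`. -/
noncomputable def mkCLM (a b c d : ℝ) : ℝ × ℝ →L[ℝ] ℝ × ℝ :=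
  (a • ContinuousLinearMap.fst ℝ ℝ ℝ + b • ContinuousLinearMap.snd ℝ ℝ ℝ).prod
    (c • ContinuousLinearMap.fst ℝ ℝ ℝ + d • ContinuousLinearMap.snd ℝ ℝ ℝ)

/-- The map `Φ` encoding the area-1 and concyclicity conditions. -/
noncomputable def Phi (c x₁ y₁ x₂ y₂ : ℝ) : ℝ × ℝ :=
  (y₁ * x₂ + (c - x₁) * y₂ - 2,
    x₂ ^ 2 + y₂ ^ 2 - c * x₂ + ((c * x₁ - x₁ ^ 2 - y₁ ^ 2) / y₁) * y₂)

/-- If `C = (x_C, y_C)` with `y_C > 0` and `c y_C = 2`, then `Φ(C, C) = (0,0)`, the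
differential of `Φ` in the last two variables at `(C, C)` is the linear map with matrix
`[[y_C, c - x_C], [2x_C - c, (-x_C² + c x_C + y_C²)/y_C]]`, and its determinant equals
`(x_C - c)² + y_C²`, which is strictly positive. -/
theorem Phi_fixed_point_and_second_differential (c xC yC : ℝ) (hc : 0 < c)
    (hy : 0 < yC) (harea : c * yC = 2) :
    Phi c xC yC xC yC = (0, 0) ∧
    HasFDerivAt (fun p : ℝ × ℝ => Phi c xC yC p.1 p.2)
      (mkCLM yC (c - xC) (2 * xC - c) ((-xC ^ 2 + c * xC + yC ^ 2) / yC)) (xC, yC) ∧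
    yC * ((-xC ^ 2 + c * xC + yC ^ 2) / yC) - (c - xC) * (2 * xC - c) =
      (xC - c) ^ 2 + yC ^ 2 ∧
    0 < (xC - c) ^ 2 + yC ^ 2 := by
  have hy0 : yC ≠ 0 := ne_of_gt hy
  refine ⟨?_, ?_, ?_, ?_⟩
  · simp only [Phi, Prod.mk.injEq]
    constructor
    · nlinarith
    · field_simp
      ring
  · have h1 : HasFDerivAt (fun p : ℝ × ℝ => yC * p.1 + (c - xC) * p.2 - 2)
        (yC • ContinuousLinearMap.fst ℝ ℝ ℝ + (c - xC) • ContinuousLinearMap.snd ℝ ℝ ℝ)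
        (xC, yC) :=
      ((hasFDerivAt_fst.const_mul yC).add (hasFDerivAt_snd.const_mul (c - xC))).sub_const 2
    have h2 : HasFDerivAt
        (fun p : ℝ × ℝ => p.1 ^ 2 + p.2 ^ 2 - c * p.1
          + ((c * xC - xC ^ 2 - yC ^ 2) / yC) * p.2)
        ((2 * xC - c) • ContinuousLinearMap.fst ℝ ℝ ℝ
          + ((-xC ^ 2 + c * xC + yC ^ 2) / yC) • ContinuousLinearMap.snd ℝ ℝ ℝ)
        (xC, yC) := by
      have hf : HasFDerivAt (fun p : ℝ × ℝ => p.1) (ContinuousLinearMap.fst ℝ ℝ ℝ) ((xC, yC) : ℝ × ℝ) := hasFDerivAt_fst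
      have hs : HasFDerivAt (fun p : ℝ × ℝ => p.2) (ContinuousLinearMap.snd ℝ ℝ ℝ) ((xC, yC) : ℝ × ℝ) := hasFDerivAt_snd
      have := (((hf.mul hf)).add
          ((hs.mul hs))).sub
          ((hasFDerivAt_fst (𝕜 := ℝ) (p := ((xC, yC) : ℝ × ℝ))).const_mul c)
      have h := this.add
          ((hasFDerivAt_snd (𝕜 := ℝ) (p := ((xC, yC) : ℝ × ℝ))).const_mul
            ((c * xC - xC ^ 2 - yC ^ 2) / yC))
      have heq : (fun p : ℝ × ℝ => p.1 ^ 2 + p.2 ^ 2 - c * p.1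
          + ((c * xC - xC ^ 2 - yC ^ 2) / yC) * p.2)
          = (fun p : ℝ × ℝ => p.1 * p.1 + p.2 * p.2 - c * p.1
          + ((c * xC - xC ^ 2 - yC ^ 2) / yC) * p.2) := by
        funext p; ring
      rw [heq]
      refine h.congr_fderiv ?_
      ext p
      · simp [ContinuousLinearMap.smul_apply, smul_eq_mul]
        ring
      · simp [ContinuousLinearMap.smul_apply, smul_eq_mul]
        field_simp
        ring
    exact h1.prodMk h2
  · field_simp
    ring
  · positivity
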